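/- Define b(n,k) := Σ_{j=0}^{min(n,k)} j! · (j+1)! · S(n+1, j+1) · S(k+1, j+1). Then for all integers n, k ≥ 0, Σ_{ℓ=0}^{n} c(n+1, ℓ+1) · b(ℓ, k) = n! · (n+1)^{k+1}. -/

import Mathlib

open Finset

/-- Stirling numbers of the second kind. -/
def stirling2 : ℕ → ℕ → ℕ
  | 0, 0 => 1
  | 0, _ + 1 => 0
  | _ + 1, 0 => 0
  | n + 1, k + 1 => (k + 1) * stirling2 n (k + 1) + stirling2 n k

/-- Unsigned Stirling numbers of the first kind. -/
def stirling1 : ℕ → ℕ → ℕ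
  | 0, 0 => 1
  | 0, _ + 1 => 0
  | _ + 1, 0 => 0
  | n + 1, k + 1 => n * stirling1 n (k + 1) + stirling1 n k

/-- The normalized symmetrized poly-Bernoulli number evaluated at 1. -/
def bNum (n k : ℕ) : ℕ :=
  ∑ j ∈ Finset.range (min n k + 1),
    j.factorial * (j + 1).factorial * stirling2 (n + 1) (j + 1) * stirling2 (k + 1) (j + 1)

lemma stirling2_eq_zero : ∀ (n k : ℕ), n < k → stirling2 n k = 0 := by
  intro n
  induction n with
  | zero =>
    intro k h
    match k, h with
    | k+1, _ => rfl
  | succ n ih =>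
    intro k h
    match k, h with
    | k+1, h =>
      show (k+1) * stirling2 n (k+1) + stirling2 n k = 0
      rw [ih (k+1) (by omega), ih k (by omega)]
      simp

lemma stirling1_eq_zero : ∀ (n k : ℕ), n < k → stirling1 n k = 0 := by
  intro n
  induction n with
  | zero =>
    intro k h
    match k, h with
    | k+1, _ => rfl
  | succ n ih =>
    intro k h
    match k, h with
    | k+1, h =>
      show n * stirling1 n (k+1) + stirling1 n k = 0
      rw [ih (k+1) (by omega), ih k (by omega)]
      simp

lemma xD (x i : ℕ) : x * x.descFactorial i = x.descFactorial (i+1) + i * x.descFactorial i := by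
  rcases le_or_gt i x with h | h
  · rw [Nat.descFactorial_succ]
    have h2 : x - i + i = x := Nat.sub_add_cancel h
    calc x * x.descFactorial i = (x - i + i) * x.descFactorial i := by rw [h2]
      _ = (x - i) * x.descFactorial i + i * x.descFactorial i := by ring
  · have h1 : x.descFactorial i = 0 := Nat.descFactorial_eq_zero_iff_lt.mpr h
    have h2 : x.descFactorial (i+1) = 0 := Nat.descFactorial_eq_zero_iff_lt.mpr (by omega)
    simp [h1, h2]

lemma stirling2_sum (m x : ℕ) :
    ∑ i ∈ range (m+1), stirling2 m i * x.descFactorial i = x ^ m := by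
  induction m with
  | zero => simp [stirling2]
  | succ m ih =>
    rw [Finset.sum_range_succ']
    have h0 : stirling2 (m+1) 0 = 0 := rfl
    rw [h0]
    simp only [zero_mul, add_zero]
    have hrec : ∀ i, stirling2 (m+1) (i+1) = (i+1) * stirling2 m (i+1) + stirling2 m i := by
      intro i; rfl
    calc ∑ i ∈ range (m+1), stirling2 (m+1) (i+1) * x.descFactorial (i+1)
        = ∑ i ∈ range (m+1), ((i+1) * stirling2 m (i+1) * x.descFactorial (i+1)
            + stirling2 m i * x.descFactorial (i+1)) := by
          exact sum_congr rfl fun i _ => by rw [hrec i]; ring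
      _ = (∑ i ∈ range (m+1), (i+1) * stirling2 m (i+1) * x.descFactorial (i+1))
            + ∑ i ∈ range (m+1), stirling2 m i * x.descFactorial (i+1) := by
          rw [Finset.sum_add_distrib]
      _ = (∑ i ∈ range (m+1), i * stirling2 m i * x.descFactorial i)
            + ∑ i ∈ range (m+1), stirling2 m i * x.descFactorial (i+1) := by
          congr 1
          have := Finset.sum_range_succ' (fun i => i * stirling2 m i * x.descFactorial i) (m+1)
          rw [Finset.sum_range_succ (fun i => i * stirling2 m i * x.descFactorial i) (m+1)] at this
          rw [stirling2_eq_zero m (m+1) (by omega)] at this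
          simp at this
          exact this.symm
      _ = ∑ i ∈ range (m+1), stirling2 m i * (x * x.descFactorial i) := by
          rw [← Finset.sum_add_distrib]
          exact sum_congr rfl fun i _ => by rw [xD]; ring
      _ = x * ∑ i ∈ range (m+1), stirling2 m i * x.descFactorial i := by
          rw [Finset.mul_sum]
          exact sum_congr rfl fun i _ => by ring
      _ = x ^ (m+1) := by rw [ih]; ring

/-- the inner convolution -/
def A (n j : ℕ) : ℕ := ∑ l ∈ range (n+1), stirling1 (n+1) (l+1) * stirling2 (l+1) (j+1)

lemma A_rec (n j : ℕ) :
    A (n+1) j = (n + j + 2) * A n j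
      + ∑ l ∈ range (n+1), stirling1 (n+1) (l+1) * stirling2 (l+1) j := by
  have hrec : ∀ l, stirling1 (n+2) (l+1) = (n+1) * stirling1 (n+1) (l+1) + stirling1 (n+1) l := by
    intro l; rfl
  have hrec2 : ∀ l, stirling2 (l+2) (j+1) = (j+1) * stirling2 (l+1) (j+1) + stirling2 (l+1) j := by
    intro l; rfl
  calc A (n+1) j
      = ∑ l ∈ range (n+2), ((n+1) * stirling1 (n+1) (l+1) + stirling1 (n+1) l)
          * stirling2 (l+1) (j+1) := by
        unfold A
        exact sum_congr rfl fun l _ => by rw [hrec l]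
    _ = (n+1) * (∑ l ∈ range (n+2), stirling1 (n+1) (l+1) * stirling2 (l+1) (j+1))
          + ∑ l ∈ range (n+2), stirling1 (n+1) l * stirling2 (l+1) (j+1) := by
        rw [Finset.mul_sum, ← Finset.sum_add_distrib]
        exact sum_congr rfl fun l _ => by ring
    _ = (n+1) * A n j
          + ∑ l ∈ range (n+1), stirling1 (n+1) (l+1) * stirling2 (l+2) (j+1) := by
        congr 1
        · rw [Finset.sum_range_succ, stirling1_eq_zero (n+1) (n+2) (by omega)]
          simp [A]
        · rw [Finset.sum_range_succ' (fun l => stirling1 (n+1) l * stirling2 (l+1) (j+1)) (n+1)]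
          have : stirling1 (n+1) 0 = 0 := rfl
          rw [this]
          simp
    _ = (n+1) * A n j + ((j+1) * A n j
          + ∑ l ∈ range (n+1), stirling1 (n+1) (l+1) * stirling2 (l+1) j) := by
        congr 1
        unfold A
        rw [Finset.mul_sum, ← Finset.sum_add_distrib]
        exact sum_congr rfl fun l _ => by rw [hrec2 l]; ring
    _ = (n + j + 2) * A n j
          + ∑ l ∈ range (n+1), stirling1 (n+1) (l+1) * stirling2 (l+1) j := by ring

lemma A_succ_zero (n : ℕ) : A (n+1) 0 = (n+2) * A n 0 := by
  rw [A_rec]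
  have : ∀ l, stirling2 (l+1) 0 = 0 := fun l => rfl
  simp [this]

lemma A_succ_succ (n m : ℕ) : A (n+1) (m+1) = (n+m+3) * A n (m+1) + A n m := by
  rw [A_rec]
  have : (n + (m+1) + 2) = n+m+3 := by ring
  rw [this]
  rfl

lemma descId (n m : ℕ) :
    (n+m+3) * (n.factorial * (n+1).descFactorial (m+2))
      + (m+1) * (m+2) * (n.factorial * (n+1).descFactorial (m+1))
    = (n+1).factorial * (n+2).descFactorial (m+2) := by
  have hd2 : (n+1).descFactorial (m+2) = (n - m) * (n+1).descFactorial (m+1) := by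
    rw [show m+2 = (m+1)+1 from rfl, Nat.descFactorial_succ]
    congr 1
    omega
  have hd3 : (n+2).descFactorial (m+2) = (n+2) * (n+1).descFactorial (m+1) := by
    rw [show m+2 = (m+1)+1 from rfl, show n+2 = (n+1)+1 from rfl,
      Nat.succ_descFactorial_succ]
  rcases le_or_gt m n with h | h
  · obtain ⟨d, rfl⟩ : ∃ d, n = m + d := ⟨n - m, by omega⟩
    rw [hd2, hd3, Nat.factorial_succ, show m + d - m = d by omega]
    ring
  · have h1 : (n+1).descFactorial (m+1) = 0 :=
      Nat.descFactorial_eq_zero_iff_lt.mpr (by omega)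
    rw [hd2, hd3, h1]
    simp

lemma key (n : ℕ) : ∀ j, j.factorial * (j+1).factorial * A n j
    = n.factorial * (n+1).descFactorial (j+1) := by
  induction n with
  | zero =>
    intro j
    cases j with
    | zero => decide
    | succ m =>
      have h2 : stirling2 1 (m+2) = 0 := stirling2_eq_zero _ _ (by omega)
      have hd : (1:ℕ).descFactorial (m+2) = 0 :=
        Nat.descFactorial_eq_zero_iff_lt.mpr (by omega)
      simp [A, h2, hd]
  | succ n ih =>
    intro j
    cases j with
    | zero =>
      rw [A_succ_zero]
      have hA : A n 0 = n.factorial * (n+1) := by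
        simpa using ih 0
      simp only [zero_add, Nat.factorial_zero, Nat.factorial_one, Nat.factorial_succ,
        Nat.descFactorial_one, hA, one_mul, mul_one]
      ring
    | succ m =>
      rw [A_succ_succ]
      have h1 := ih (m+1)
      have h2 := ih m
      have e1 : (m+1).factorial * (m+2).factorial * ((n+m+3) * A n (m+1) + A n m)
          = (n+m+3) * ((m+1).factorial * (m+2).factorial * A n (m+1))
            + (m+1) * (m+2) * (m.factorial * (m+1).factorial * A n m) := by
        rw [show (m+2) = (m+1)+1 from rfl, Nat.factorial_succ (m+1), Nat.factorial_succ m]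
        ring
      rw [e1, h1, h2]
      exact descId n m

theorem stmt10 (n k : ℕ) :
    ∑ l ∈ Finset.range (n + 1), stirling1 (n + 1) (l + 1) * bNum l k =
      n.factorial * (n + 1) ^ (k + 1) := by
  have hb : ∀ l, bNum l k = ∑ j ∈ range (k+1),
      j.factorial * (j + 1).factorial * stirling2 (l + 1) (j + 1) * stirling2 (k + 1) (j + 1) := by
    intro l
    unfold bNum
    apply Finset.sum_subset
    · intro j hj
      simp only [Finset.mem_range] at hj ⊢
      omega
    · intro j hj hj2
      simp only [Finset.mem_range] at hj hj2
      have : l < j := by omega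
      rw [stirling2_eq_zero (l+1) (j+1) (by omega)]
      ring
  calc ∑ l ∈ Finset.range (n + 1), stirling1 (n + 1) (l + 1) * bNum l k
      = ∑ l ∈ range (n+1), ∑ j ∈ range (k+1),
          stirling1 (n+1) (l+1) * (j.factorial * (j + 1).factorial
            * stirling2 (l + 1) (j + 1) * stirling2 (k + 1) (j + 1)) := by
        exact sum_congr rfl fun l _ => by rw [hb l, Finset.mul_sum]
    _ = ∑ j ∈ range (k+1), ∑ l ∈ range (n+1),
          stirling1 (n+1) (l+1) * (j.factorial * (j + 1).factorial
            * stirling2 (l + 1) (j + 1) * stirling2 (k + 1) (j + 1)) := Finset.sum_comm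
    _ = ∑ j ∈ range (k+1), stirling2 (k+1) (j+1)
          * (j.factorial * (j+1).factorial * A n j) := by
        refine sum_congr rfl fun j _ => ?_
        unfold A
        simp only [Finset.mul_sum]
        exact sum_congr rfl fun l _ => by ring
    _ = ∑ j ∈ range (k+1), stirling2 (k+1) (j+1)
          * (n.factorial * (n+1).descFactorial (j+1)) := by
        exact sum_congr rfl fun j _ => by rw [key n j]
    _ = n.factorial * ∑ j ∈ range (k+1), stirling2 (k+1) (j+1)
          * (n+1).descFactorial (j+1) := by
        rw [Finset.mul_sum]
        exact sum_congr rfl fun j _ => by ring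
    _ = n.factorial * (n + 1) ^ (k + 1) := by
        congr 1
        have := stirling2_sum (k+1) (n+1)
        rw [Finset.sum_range_succ' (fun i => stirling2 (k+1) i * (n+1).descFactorial i) (k+1)] at this
        have h0 : stirling2 (k+1) 0 = 0 := rfl
        rw [h0] at this
        simpa using this
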